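/- Let n ≥ 5 and let ρ: H_n → PU(1,1) be a representation. Define ρJ: H_n → PU(1,1) on the generators by ρJ(r_i) := ρ(r_{n−i}) (indices modulo n, r₀ = r_n). Then ρJ is a well-defined representation of H_n and Area(ρJ) = −Area(ρ). -/

import Mathlib

noncomputable section
open Matrix Complex
namespace HView

abbrev W : Type := Fin 2 → ℂ

def herm (x y : W) : ℂ := x 0 * (starRingEnd ℂ) (y 0) - x 1 * (starRingEnd ℂ) (y 1)

def IsNeg (p : W) : Prop := p ≠ 0 ∧ (herm p p).re < 0
def IsIso (p : W) : Prop := p ≠ 0 ∧ herm p p = 0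
def IsNonpos (p : W) : Prop := p ≠ 0 ∧ (herm p p).re ≤ 0

def triArea (p₁ p₂ p₃ : W) : ℝ :=
  2 * Complex.arg (-(herm p₁ p₂ * herm p₂ p₃ * herm p₃ p₁))

def Jm : Matrix (Fin 2) (Fin 2) ℂ := !![1, 0; 0, -1]

def SU11 : Subgroup (SpecialLinearGroup (Fin 2) ℂ) where
  carrier := {A | (A : Matrix (Fin 2) (Fin 2) ℂ)ᴴ * Jm * (A : Matrix (Fin 2) (Fin 2) ℂ) = Jm}
  one_mem' := by simp
  mul_mem' := by
    intro A B hA hB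
    simp only [Set.mem_setOf_eq] at hA hB ⊢
    have hco : ((A * B : SpecialLinearGroup (Fin 2) ℂ) : Matrix (Fin 2) (Fin 2) ℂ)
        = (A : Matrix (Fin 2) (Fin 2) ℂ) * (B : Matrix (Fin 2) (Fin 2) ℂ) := rfl
    rw [hco, conjTranspose_mul]
    calc (B : Matrix (Fin 2) (Fin 2) ℂ)ᴴ * (A : Matrix (Fin 2) (Fin 2) ℂ)ᴴ * Jm *
          ((A : Matrix (Fin 2) (Fin 2) ℂ) * (B : Matrix (Fin 2) (Fin 2) ℂ))
        = (B : Matrix (Fin 2) (Fin 2) ℂ)ᴴ *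
          ((A : Matrix (Fin 2) (Fin 2) ℂ)ᴴ * Jm * (A : Matrix (Fin 2) (Fin 2) ℂ)) *
          (B : Matrix (Fin 2) (Fin 2) ℂ) := by noncomm_ring
      _ = Jm := by rw [hA]; exact hB
  inv_mem' := by
    intro A hA
    simp only [Set.mem_setOf_eq] at hA ⊢
    have h1 : (A : Matrix (Fin 2) (Fin 2) ℂ) *
        ((A⁻¹ : SpecialLinearGroup (Fin 2) ℂ) : Matrix (Fin 2) (Fin 2) ℂ) = 1 := by
      rw [← Matrix.SpecialLinearGroup.coe_mul, mul_inv_cancel,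
        Matrix.SpecialLinearGroup.coe_one]
    have h2 : ((A⁻¹ : SpecialLinearGroup (Fin 2) ℂ) : Matrix (Fin 2) (Fin 2) ℂ)ᴴ *
        (A : Matrix (Fin 2) (Fin 2) ℂ)ᴴ = 1 := by
      rw [← conjTranspose_mul, h1, conjTranspose_one]
    calc ((A⁻¹ : SpecialLinearGroup (Fin 2) ℂ) : Matrix (Fin 2) (Fin 2) ℂ)ᴴ * Jm *
          ((A⁻¹ : SpecialLinearGroup (Fin 2) ℂ) : Matrix (Fin 2) (Fin 2) ℂ)
        = ((A⁻¹ : SpecialLinearGroup (Fin 2) ℂ) : Matrix (Fin 2) (Fin 2) ℂ)ᴴ *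
          ((A : Matrix (Fin 2) (Fin 2) ℂ)ᴴ * Jm * (A : Matrix (Fin 2) (Fin 2) ℂ)) *
          ((A⁻¹ : SpecialLinearGroup (Fin 2) ℂ) : Matrix (Fin 2) (Fin 2) ℂ) := by rw [hA]
      _ = (((A⁻¹ : SpecialLinearGroup (Fin 2) ℂ) : Matrix (Fin 2) (Fin 2) ℂ)ᴴ *
            (A : Matrix (Fin 2) (Fin 2) ℂ)ᴴ) * Jm *
          ((A : Matrix (Fin 2) (Fin 2) ℂ) *
            ((A⁻¹ : SpecialLinearGroup (Fin 2) ℂ) : Matrix (Fin 2) (Fin 2) ℂ)) := by noncomm_ring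
      _ = Jm := by rw [h1, h2, one_mul, mul_one]


instance : Fact (Even (Fintype.card (Fin 2))) := ⟨by decide⟩

def negOne : SU11 := ⟨-1, by
  show ((-1 : SpecialLinearGroup (Fin 2) ℂ) : Matrix (Fin 2) (Fin 2) ℂ)ᴴ * Jm *
    ((-1 : SpecialLinearGroup (Fin 2) ℂ) : Matrix (Fin 2) (Fin 2) ℂ) = Jm
  simp⟩

lemma negOne_mul_negOne : negOne * negOne = 1 := by
  apply Subtype.ext
  show ((-1 : SpecialLinearGroup (Fin 2) ℂ)) * (-1) = 1
  apply Subtype.ext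
  show ((-1 : Matrix (Fin 2) (Fin 2) ℂ)) * (-1) = 1
  simp

lemma negOne_central (g : SU11) : g * negOne = negOne * g := by
  apply Subtype.ext
  apply Subtype.ext
  show ((g : SpecialLinearGroup (Fin 2) ℂ) : Matrix (Fin 2) (Fin 2) ℂ) * (-1)
      = (-1) * ((g : SpecialLinearGroup (Fin 2) ℂ) : Matrix (Fin 2) (Fin 2) ℂ)
  simp

def pm1 : Subgroup SU11 where
  carrier := {1, negOne}
  one_mem' := Or.inl rfl
  mul_mem' := by
    rintro a b (rfl | ha) (rfl | hb)
    · exact Or.inl (one_mul 1)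
    · rw [Set.mem_singleton_iff] at hb; subst hb
      exact Or.inr (by rw [one_mul]; rfl)
    · rw [Set.mem_singleton_iff] at ha; subst ha
      exact Or.inr (by rw [mul_one]; rfl)
    · rw [Set.mem_singleton_iff] at ha hb; subst ha; subst hb
      exact Or.inl negOne_mul_negOne
  inv_mem' := by
    rintro a (rfl | ha)
    · exact Or.inl inv_one
    · rw [Set.mem_singleton_iff] at ha; subst ha
      refine Or.inr ?_
      rw [Set.mem_singleton_iff, inv_eq_iff_mul_eq_one, negOne_mul_negOne]

instance pm1_normal : pm1.Normal := by
  constructor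
  intro x hx g
  rcases hx with rfl | hx
  · simpa using pm1.one_mem
  · rw [Set.mem_singleton_iff] at hx; subst hx
    have h : g * negOne * g⁻¹ = negOne := by
      rw [negOne_central, mul_assoc, mul_inv_cancel, mul_one]
    rw [h]
    exact Or.inr rfl

abbrev PU11 := SU11 ⧸ pm1

def mobius (A : SU11) (z : ℂ) : ℂ :=
  (((A : SpecialLinearGroup (Fin 2) ℂ) : Matrix (Fin 2) (Fin 2) ℂ) 0 0 * z +
    ((A : SpecialLinearGroup (Fin 2) ℂ) : Matrix (Fin 2) (Fin 2) ℂ) 0 1) /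
  (((A : SpecialLinearGroup (Fin 2) ℂ) : Matrix (Fin 2) (Fin 2) ℂ) 1 0 * z +
    ((A : SpecialLinearGroup (Fin 2) ℂ) : Matrix (Fin 2) (Fin 2) ℂ) 1 1)

lemma mobius_mul_negOne (A : SU11) (z : ℂ) : mobius (A * negOne) z = mobius A z := by
  have hm : (((A * negOne : SU11) : SpecialLinearGroup (Fin 2) ℂ) : Matrix (Fin 2) (Fin 2) ℂ)
      = -(((A : SpecialLinearGroup (Fin 2) ℂ) : Matrix (Fin 2) (Fin 2) ℂ)) := by
    show ((A : SpecialLinearGroup (Fin 2) ℂ) : Matrix (Fin 2) (Fin 2) ℂ) *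
      (-1 : Matrix (Fin 2) (Fin 2) ℂ) = _
    simp
  set M := ((A : SpecialLinearGroup (Fin 2) ℂ) : Matrix (Fin 2) (Fin 2) ℂ) with hM
  unfold mobius
  rw [hm]
  simp only [Matrix.neg_apply]
  rw [show -M 0 0 * z + -M 0 1 = -(M 0 0 * z + M 0 1) by ring,
    show -M 1 0 * z + -M 1 1 = -(M 1 0 * z + M 1 1) by ring, neg_div_neg_eq]

def pact (g : PU11) : ℂ → ℂ :=
  Quotient.liftOn' g (fun A => mobius A) (by
    intro a b hab
    have hab' : a⁻¹ * b ∈ pm1 := QuotientGroup.leftRel_apply.mp hab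
    have key : b = a ∨ b = a * negOne := by
      rcases hab' with h | h
      · left
        have : a⁻¹ * b = 1 := h
        rw [inv_mul_eq_one] at this
        exact this.symm
      · right
        rw [Set.mem_singleton_iff] at h
        rw [inv_mul_eq_iff_eq_mul] at h
        exact h
    funext z
    rcases key with rfl | rfl
    · rfl
    · exact (mobius_mul_negOne a z).symm)

lemma pact_mk (A : SU11) (z : ℂ) : pact (QuotientGroup.mk A : PU11) z = mobius A z := rfl


instance : TopologicalSpace (SpecialLinearGroup (Fin 2) ℂ) :=
  instTopologicalSpaceSubtype

def IsHyperbolic (g : PU11) : Prop :=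
  ∃ A : SU11, (QuotientGroup.mk A : PU11) = g ∧
    (Matrix.trace ((A : SpecialLinearGroup (Fin 2) ℂ) : Matrix (Fin 2) (Fin 2) ℂ)).im = 0 ∧
    2 < |(Matrix.trace ((A : SpecialLinearGroup (Fin 2) ℂ) : Matrix (Fin 2) (Fin 2) ℂ)).re|

def IsAttractor (g : PU11) (z : ℂ) : Prop :=
  ‖z‖ = 1 ∧ ∃ A : SU11, (QuotientGroup.mk A : PU11) = g ∧
    ∃ lam : ℂ, 1 < ‖lam‖ ∧
      ((A : SpecialLinearGroup (Fin 2) ℂ) : Matrix (Fin 2) (Fin 2) ℂ).mulVec ![z, 1]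
        = lam • ![z, 1]

def IsRepeller (g : PU11) (z : ℂ) : Prop :=
  ‖z‖ = 1 ∧ ∃ A : SU11, (QuotientGroup.mk A : PU11) = g ∧
    ∃ lam : ℂ, ‖lam‖ < 1 ∧
      ((A : SpecialLinearGroup (Fin 2) ℂ) : Matrix (Fin 2) (Fin 2) ℂ).mulVec ![z, 1]
        = lam • ![z, 1]

def IsPositiveCycle (l : List ℂ) : Prop :=
  3 ≤ l.length ∧ ∃ t : Fin l.length → ℝ,
    StrictMono t ∧ (∀ j k : Fin l.length, t j - t k < 2 * Real.pi) ∧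
    ∀ j : Fin l.length, l.get j = Complex.exp (Complex.I * (t j : ℂ))

def IsNegativeCycle (l : List ℂ) : Prop :=
  3 ≤ l.length ∧ ∃ t : Fin l.length → ℝ,
    StrictAnti t ∧ (∀ j k : Fin l.length, t j - t k < 2 * Real.pi) ∧
    ∀ j : Fin l.length, l.get j = Complex.exp (Complex.I * (t j : ℂ))

def longRel (n : ℕ) : FreeGroup (ZMod n) :=
  (((List.range n).map (fun k => FreeGroup.of ((k + 1 : ℕ) : ZMod n))).reverse).prod

def Hrels (n : ℕ) : Set (FreeGroup (ZMod n)) :=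
  {x | ∃ i : ZMod n, x = FreeGroup.of i * FreeGroup.of i} ∪ {longRel n}

abbrev H (n : ℕ) := PresentedGroup (Hrels n)

def r (n : ℕ) (i : ZMod n) : H n := PresentedGroup.of i

def pts {n : ℕ} (A : ZMod n → SU11) (p : W) : ℕ → W
  | 0 => p
  | (k+1) => (((A ((k + 1 : ℕ) : ZMod n) : SpecialLinearGroup (Fin 2) ℂ)
      : Matrix (Fin 2) (Fin 2) ℂ)).mulVec (pts A p k)

def IsLift {n : ℕ} (ρ : H n →* PU11) (A : ZMod n → SU11) : Prop :=
  (∀ i : ZMod n, (QuotientGroup.mk (A i) : PU11) = ρ (r n i)) ∧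
  ((((List.range n).map (fun k => A ((k + 1 : ℕ) : ZMod n))).reverse).prod = 1 ∨
   (((List.range n).map (fun k => A ((k + 1 : ℕ) : ZMod n))).reverse).prod = negOne)

def areaRep (n : ℕ) (A : ZMod n → SU11) (c p : W) : ℝ :=
  ∑ i ∈ Finset.range n, triArea c (pts A p (i + 1)) (pts A p (i + 2))

def HasArea {n : ℕ} (ρ : H n →* PU11) (a : ℝ) : Prop :=
  ∀ A : ZMod n → SU11, IsLift ρ A → ∀ c p : W, IsNeg c → IsNeg p → areaRep n A c p = a

def orbitSeq {n : ℕ} (ρ : H n →* PU11) (j : ZMod n) (z : ℂ) : ℕ → ℂ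
  | 0 => z
  | (k+1) => pact (ρ (r n (j + (k : ℕ)))) (orbitSeq ρ j z k)

def iCycle {n : ℕ} (ρ : H n →* PU11) (i : ZMod n) (b e : ℂ) : List ℂ :=
  ((List.range (n - 2)).map (fun k => [orbitSeq ρ (i + 1) b k, orbitSeq ρ (i + 1) e k])).flatten

def IsReflection (g : PU11) (q : W) : Prop :=
  ∃ A : SU11, (QuotientGroup.mk A : PU11) = g ∧
    ∀ x : W, ((A : SpecialLinearGroup (Fin 2) ℂ) : Matrix (Fin 2) (Fin 2) ℂ).mulVec x
      = Complex.I • (x - (2 * herm x q / herm q q) • q)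

def Gsub (n : ℕ) : Subgroup (H n) :=
  Subgroup.closure {x : H n | ∃ i j : ZMod n, x = r n i * r n j}

lemma rr_mem (n : ℕ) (i j : ZMod n) : r n i * r n j ∈ Gsub n :=
  Subgroup.subset_closure ⟨i, j, rfl⟩

lemma rrrr_mem (n : ℕ) (i j k l : ZMod n) :
    r n i * r n j * r n k * r n l ∈ Gsub n := by
  have h : r n i * r n j * r n k * r n l = (r n i * r n j) * (r n k * r n l) := by
    rw [mul_assoc]
  rw [h]
  exact mul_mem (rr_mem n i j) (rr_mem n k l)

def v (n : ℕ) (k : ℕ) : H n :=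
  (((List.range (k % n)).map (fun m => r n ((m + 1 : ℕ) : ZMod n))).reverse).prod

def w0 (n : ℕ) (i : ℕ) : H n := if Even i then v n i else v n i * r n 0

def w (n : ℕ) (j : ℕ) : H n :=
  if j % (2 * n - 2) ≤ n - 2 then w0 n (j % (2 * n - 2))
  else r n 0 * w0 n (j % (2 * n - 2) - (n - 1)) * r n 0

def IsLiftGW {n : ℕ} (ρ : ↥(Gsub n) →* PU11) (u : ℕ → H n) (B : ℕ → SU11) : Prop :=
  ∀ (j : ℕ) (h : u j ∈ Gsub n), (QuotientGroup.mk (B j) : PU11) = ρ ⟨u j, h⟩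

def areaG (n : ℕ) (B : ℕ → SU11) (c p q : W) : ℝ :=
  ∑ j ∈ Finset.range (2 * n - 2),
    triArea c
      (((B j : SpecialLinearGroup (Fin 2) ℂ) : Matrix (Fin 2) (Fin 2) ℂ).mulVec
        (if Even j then p else q))
      (((B ((j + 1) % (2 * n - 2)) : SpecialLinearGroup (Fin 2) ℂ)
          : Matrix (Fin 2) (Fin 2) ℂ).mulVec
        (if Even ((j + 1) % (2 * n - 2)) then p else q))

def HasAreaG {n : ℕ} (ρ : ↥(Gsub n) →* PU11) (a : ℝ) : Prop :=
  ∀ B : ℕ → SU11, IsLiftGW ρ (w n) B →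
    ∀ c p q : W, IsNeg c → IsNeg p → IsNeg q → areaG n B c p q = a

def bigCycle (n : ℕ) (s t s' t' : ZMod n → ℂ) (wd : ℕ → ℂ) : List ℂ :=
  [t 1, s 2, wd 2] ++
  ((List.range (n - 4)).map
    (fun k => [s ((k + 3 : ℕ) : ZMod n), t ((k + 3 : ℕ) : ZMod n), wd (k + 3)])).flatten ++
  [t ((n - 1 : ℕ) : ZMod n), s ((n : ℕ) : ZMod n)] ++
  [s' 2, wd (n + 1)] ++
  ((List.range (n - 4)).map
    (fun k => [s' ((k + 3 : ℕ) : ZMod n), t' ((k + 3 : ℕ) : ZMod n), wd (n + k + 2)])).flatten ++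
  [t' ((n - 1 : ℕ) : ZMod n)]

def IsSE {n : ℕ} (ρ ρ' : H n →* PU11) (i : ZMod n) (t : ℝ) : Prop :=
  IsHyperbolic (ρ (r n i * r n (i - 1))) ∧
  ∃ φ : ℝ → PU11, Continuous φ ∧ (∀ s u : ℝ, φ (s + u) = φ s * φ u) ∧
    IsHyperbolic (φ 1) ∧ φ 1 * φ 1 = ρ (r n i * r n (i - 1)) ∧
    (∀ j : ZMod n, j ≠ i - 1 → j ≠ i → ρ' (r n j) = ρ (r n j)) ∧
    ρ' (r n (i - 1)) = φ t * ρ (r n (i - 1)) * (φ t)⁻¹ ∧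
    ρ' (r n i) = φ t * ρ (r n i) * (φ t)⁻¹

def ConjRep {n : ℕ} (ρ ρ' : H n →* PU11) : Prop :=
  ∃ g : PU11, ∀ h : H n, ρ' h = g * ρ h * g⁻¹

def NormalizedAt {n : ℕ} (ρ : H n →* PU11) (i : ZMod n) : Prop :=
  IsRepeller (ρ (r n i * r n (i - 1))) (-1) ∧
  IsAttractor (ρ (r n i * r n (i - 1))) 1 ∧
  pact (ρ (r n i)) 0 = 0

def PPlus {n : ℕ} (ρ : H n →* PU11) : Prop :=
  Function.Injective ρ ∧ DiscreteTopology (MonoidHom.range ρ) ∧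
  HasArea ρ (((n : ℝ) - 4) * Real.pi)

def tupleAt {n : ℕ} (ρ : H n →* PU11) (i : ZMod n) : List ℂ :=
  (iCycle ρ i (-1) 1).drop 2

def KPlusL (n : ℕ) (l : List ℂ) : Prop :=
  l.length = 2 * n - 6 ∧ (∀ z ∈ l, ‖z‖ = 1 ∧ 0 < z.im) ∧ IsPositiveCycle l

def PrelsList (n : ℕ) : Set (FreeGroup (ZMod n)) :=
  { ((List.range n).map (fun k => FreeGroup.of ((n - k : ℕ) : ZMod n))).prod,
    ((List.range (n / 2)).map (fun k => FreeGroup.of ((n - 2 * k : ℕ) : ZMod n))).prod,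
    ((List.range (n / 2)).map (fun k => FreeGroup.of ((n - 1 - 2 * k : ℕ) : ZMod n))).prod }

abbrev Pgrp (n : ℕ) := PresentedGroup (PrelsList n)

def gp (n : ℕ) (i : ZMod n) : Pgrp n := PresentedGroup.of i


lemma herm_comm (x y : W) : herm y x = (starRingEnd ℂ) (herm x y) := by
  simp only [herm, _root_.map_sub, _root_.map_mul, Complex.conj_conj]; ring

lemma herm_self (p : W) : herm p p = ((normSq (p 0) - normSq (p 1) : ℝ) : ℂ) := by
  simp only [herm]
  rw [Complex.mul_conj, Complex.mul_conj]
  push_cast; ring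

lemma herm_mul_herm (x y : W) : herm x y * herm y x = ((normSq (herm x y) : ℝ) : ℂ) := by
  rw [herm_comm x y, Complex.mul_conj]

lemma revCS (x y : W) : herm x x * herm y y =
    herm x y * herm y x - ((normSq (x 0 * y 1 - x 1 * y 0) : ℝ) : ℂ) := by
  rw [← Complex.mul_conj]
  simp only [herm, _root_.map_sub, _root_.map_mul, Complex.conj_conj]
  ring

lemma gram (a b c : W) :
    herm a b * herm b c * herm c a + herm b a * herm c b * herm a c =
    herm a a * (herm b c * herm c b) + herm b b * (herm a c * herm c a)
      + herm c c * (herm a b * herm b a) - herm a a * herm b b * herm c c := by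
  simp only [herm]; ring

lemma conj_triple (a b c : W) :
    (starRingEnd ℂ) (herm a b * herm b c * herm c a) = herm b a * herm c b * herm a c := by
  simp only [_root_.map_mul, ← herm_comm]

lemma revCS_re (x y : W) :
    (herm x x).re * (herm y y).re ≤ normSq (herm x y) := by
  have h := revCS x y
  rw [herm_self x, herm_self y, herm_mul_herm] at h
  have h2 : ((normSq (x 0) - normSq (x 1)) * (normSq (y 0) - normSq (y 1)) : ℝ)
      = (normSq (herm x y) - normSq (x 0 * y 1 - x 1 * y 0) : ℝ) := by
    exact_mod_cast h
  rw [herm_self x, herm_self y]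
  simp only [Complex.ofReal_re]
  nlinarith [normSq_nonneg (x 0 * y 1 - x 1 * y 0)]

lemma re_triple_neg {a b c : W} (ha : (herm a a).re < 0) (hb : (herm b b).re < 0)
    (hc : (herm c c).re < 0) : (herm a b * herm b c * herm c a).re < 0 := by
  set w := herm a b * herm b c * herm c a with hw
  have hsum : w + (starRingEnd ℂ) w =
      herm a a * (herm b c * herm c b) + herm b b * (herm a c * herm c a)
        + herm c c * (herm a b * herm b a) - herm a a * herm b b * herm c c := by
    rw [hw, conj_triple]; exact gram a b c
  have hA : herm a a = (((herm a a).re : ℝ) : ℂ) := by rw [herm_self]; norm_num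
  have hB : herm b b = (((herm b b).re : ℝ) : ℂ) := by rw [herm_self]; norm_num
  have hC : herm c c = (((herm c c).re : ℝ) : ℂ) := by rw [herm_self]; norm_num
  rw [herm_mul_herm b c, herm_mul_herm a c, herm_mul_herm a b, hA, hB, hC] at hsum
  have hre := congrArg Complex.re hsum
  simp only [Complex.add_re, Complex.conj_re, Complex.sub_re, Complex.mul_re,
    Complex.ofReal_re, Complex.ofReal_im, mul_zero, zero_mul, sub_zero, zero_sub, neg_zero,
    add_zero, mul_im, zero_add] at hre
  have h1 := revCS_re a b
  have h2 := revCS_re a c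
  have h3 := revCS_re b c
  nlinarith [mul_nonneg (neg_nonneg.mpr ha.le) (sub_nonneg.mpr h3),
    mul_nonneg (neg_nonneg.mpr hb.le) (sub_nonneg.mpr h2),
    mul_nonneg (neg_nonneg.mpr hc.le) (sub_nonneg.mpr h1),
    mul_pos (mul_pos_of_neg_of_neg ha hb) (neg_pos.mpr hc)]

lemma herm_neg_left (x y : W) : herm (-x) y = -herm x y := by
  simp [herm]; ring

lemma herm_neg_right (x y : W) : herm x (-y) = -herm x y := by
  simp [herm]; ring

def PM (x y : W) : Prop := y = x ∨ y = -x

lemma PM.refl (x : W) : PM x x := Or.inl rfl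

lemma PM.symm {x y : W} (h : PM x y) : PM y x := by
  rcases h with rfl | rfl
  · exact Or.inl rfl
  · exact Or.inr (neg_neg x).symm

lemma PM.trans {x y z : W} (h : PM x y) (h' : PM y z) : PM x z := by
  rcases h with rfl | rfl <;> rcases h' with rfl | rfl
  · exact Or.inl rfl
  · exact Or.inr rfl
  · exact Or.inr rfl
  · exact Or.inl (neg_neg x)

lemma triArea_pm2 {c x x' y : W} (h : PM x x') : triArea c x' y = triArea c x y := by
  rcases h with rfl | rfl
  · rfl
  · unfold triArea
    rw [herm_neg_right, herm_neg_left]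
    ring_nf

lemma triArea_pm3 {c x y y' : W} (h : PM y y') : triArea c x y' = triArea c x y := by
  rcases h with rfl | rfl
  · rfl
  · unfold triArea
    rw [herm_neg_right, herm_neg_left]
    ring_nf

lemma triArea_antisymm {c x y : W} (hc : (herm c c).re < 0) (hx : (herm x x).re < 0)
    (hy : (herm y y).re < 0) : triArea c y x = -triArea c x y := by
  have hw : (-(herm c x * herm x y * herm y c)).re > 0 := by
    have := re_triple_neg hc hx hy
    simpa using this
  have hconj : -(herm c y * herm y x * herm x c)
      = (starRingEnd ℂ) (-(herm c x * herm x y * herm y c)) := by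
    rw [map_neg, conj_triple]
    ring
  unfold triArea
  rw [hconj, Complex.arg_conj]
  have hne : (-(herm c x * herm x y * herm y c)).arg ≠ Real.pi := by
    intro h
    rw [Complex.arg_eq_pi_iff] at h
    linarith [h.1]
  rw [if_neg hne]
  ring

def mat (M : SU11) : Matrix (Fin 2) (Fin 2) ℂ :=
  ((M : SpecialLinearGroup (Fin 2) ℂ) : Matrix (Fin 2) (Fin 2) ℂ)

lemma herm_mulVec (M : SU11) (x y : W) :
    herm (mat M *ᵥ x) (mat M *ᵥ y) = herm x y := by
  have hM : (mat M)ᴴ * Jm * (mat M) = Jm := M.2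
  have h00 := congrFun (congrFun hM 0) 0
  have h01 := congrFun (congrFun hM 0) 1
  have h10 := congrFun (congrFun hM 1) 0
  have h11 := congrFun (congrFun hM 1) 1
  simp only [Matrix.mul_apply, Fin.sum_univ_two, Matrix.conjTranspose_apply, Jm,
    Matrix.cons_val', Matrix.cons_val_zero, Matrix.cons_val_one, Matrix.head_cons,
    Matrix.head_fin_const, Matrix.empty_val', Matrix.cons_val_fin_one,
    Matrix.of_apply, Complex.star_def, mul_one, mul_zero, zero_mul, add_zero, zero_add,
    mul_neg, neg_mul, one_mul] at h00 h01 h10 h11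
  have hc01 := congrArg (starRingEnd ℂ) h01
  have hc10 := congrArg (starRingEnd ℂ) h10
  simp only [_root_.map_add, _root_.map_mul, map_neg, map_zero, Complex.conj_conj]
    at hc01 hc10
  simp only [herm, Matrix.mulVec, dotProduct, Fin.sum_univ_two, _root_.map_add,
    _root_.map_mul]
  set a := mat M 0 0; set b := mat M 0 1; set c := mat M 1 0; set d := mat M 1 1
  set x0 := x 0; set x1 := x 1; set y0 := y 0; set y1 := y 1
  linear_combination (x0 * (starRingEnd ℂ) y0) * h00 + (x1 * (starRingEnd ℂ) y1) * h11
    + (x0 * (starRingEnd ℂ) y1) * hc01 + (x1 * (starRingEnd ℂ) y0) * hc10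

lemma r_sq (n : ℕ) (j : ZMod n) : r n j * r n j = 1 := by
  have : (PresentedGroup.mk (Hrels n)) (FreeGroup.of j * FreeGroup.of j) = 1 := by
    apply (QuotientGroup.eq_one_iff _).mpr
    exact Subgroup.subset_normalClosure (Or.inl ⟨j, rfl⟩)
  simpa [r, PresentedGroup.of, _root_.map_mul] using this

lemma r_inv (n : ℕ) (j : ZMod n) : (r n j)⁻¹ = r n j :=
  inv_eq_of_mul_eq_one_right (r_sq n j)

lemma long_rel (n : ℕ) :
    (((List.range n).map (fun k => r n ((k + 1 : ℕ) : ZMod n))).reverse).prod = 1 := by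
  have h : (PresentedGroup.mk (Hrels n)) (longRel n) = 1 := by
    apply (QuotientGroup.eq_one_iff _).mpr
    exact Subgroup.subset_normalClosure (Or.inr rfl)
  rw [longRel, map_list_prod, List.map_reverse, List.map_map] at h
  simpa [Function.comp_def, r, PresentedGroup.of] using h

lemma long_rel_fwd (n : ℕ) (hn : n ≠ 0) :
    ((List.range n).map (fun k => r n ((k : ℕ) : ZMod n))).prod = 1 := by
  obtain ⟨m, rfl⟩ := Nat.exists_eq_succ_of_ne_zero hn
  have hl := long_rel (m + 1)
  rw [List.range_succ, List.map_append, List.reverse_append] at hl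
  simp only [List.map_cons, List.map_nil, List.reverse_cons, List.reverse_nil,
    List.nil_append, List.prod_append, List.prod_cons, List.prod_nil, mul_one,
    List.singleton_append] at hl
  set f : ℕ → H (m + 1) := fun k => r (m + 1) ((k + 1 : ℕ) : ZMod (m + 1)) with hf
  have hQ : (((List.range m).map f).reverse).prod = (((List.range m).map f).prod)⁻¹ := by
    rw [List.prod_inv_reverse, List.map_map]
    congr 1
    congr 1
    apply List.map_congr_left
    intro k _
    simp only [Function.comp, hf, r_inv]
  have hr0 : r (m + 1) ((m + 1 : ℕ) : ZMod (m + 1)) = r (m + 1) ((0 : ℕ) : ZMod (m + 1)) := by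
    norm_num [ZMod.natCast_self]
  rw [hQ, hr0] at hl
  have hP : ((List.range m).map f).prod = r (m + 1) ((0 : ℕ) : ZMod (m + 1)) := by
    have := congrArg (fun x => x * ((List.range m).map f).prod) hl
    simp only [mul_assoc, inv_mul_cancel, mul_one, one_mul] at this
    exact this.symm
  rw [List.range_succ_eq_map, List.map_cons, List.prod_cons, List.map_map]
  have : (List.range m).map ((fun k => r (m + 1) ((k : ℕ) : ZMod (m + 1))) ∘ Nat.succ)
      = (List.range m).map f := by
    apply List.map_congr_left
    intro k _
    simp [Function.comp, hf]
  rw [this, hP]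
  simpa using r_sq (m + 1) ((0 : ℕ) : ZMod (m + 1))

lemma neg_cast_eq {n : ℕ} (hn : n ≠ 0) {k : ℕ} (hk : k < n) :
    -((( k + 1 : ℕ)) : ZMod n) = ((n - 1 - k : ℕ) : ZMod n) := by
  have h : ((n - 1 - k : ℕ) : ZMod n) + ((k + 1 : ℕ) : ZMod n) = ((n : ℕ) : ZMod n) := by
    rw [← Nat.cast_add]
    congr 1
    omega
  rw [ZMod.natCast_self] at h
  exact (eq_neg_of_add_eq_zero_left h).symm

lemma rev_map_neg {α : Type*} (n : ℕ) (hn : n ≠ 0) (g : ZMod n → α) :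
    ((List.range n).map (fun k => g (-((k + 1 : ℕ) : ZMod n)))).reverse
      = (List.range n).map (fun k => g ((k : ℕ) : ZMod n)) := by
  apply List.ext_getElem
  · simp
  · intro j h1 h2
    simp only [List.length_reverse, List.length_map, List.length_range] at h1 h2
    rw [List.getElem_reverse]
    simp only [List.getElem_map, List.getElem_range, List.length_map, List.length_range]
    congr 1
    have hj : n - 1 - j < n := by omega
    rw [neg_cast_eq hn hj]
    congr 1
    omega

lemma neg_long_rel (n : ℕ) (hn : n ≠ 0) :
    (((List.range n).map (fun k => r n (-((k + 1 : ℕ) : ZMod n)))).reverse).prod = 1 := by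
  rw [rev_map_neg n hn]
  exact long_rel_fwd n hn

lemma exists_sigma (n : ℕ) (hn : n ≠ 0) (ρ : H n →* PU11) :
    ∃ σ : H n →* PU11, ∀ i : ZMod n, σ (r n i) = ρ (r n (-i)) := by
  have h : ∀ x ∈ Hrels n, FreeGroup.lift (fun i => ρ (r n (-i))) x = 1 := by
    intro x hx
    rcases hx with ⟨i, rfl⟩ | hx
    · rw [_root_.map_mul, FreeGroup.lift_apply_of, ← _root_.map_mul, r_sq, _root_.map_one]
    · rw [Set.mem_singleton_iff] at hx
      subst hx
      have key := congrArg ρ (neg_long_rel n hn)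
      rw [map_list_prod, List.map_reverse, List.map_map, _root_.map_one] at key
      rw [longRel, map_list_prod, List.map_reverse, List.map_map]
      have he : (List.range n).map ((FreeGroup.lift fun i => ρ (r n (-i)))
            ∘ fun k => FreeGroup.of ((k + 1 : ℕ) : ZMod n))
          = (List.range n).map (ρ ∘ fun k => r n (-((k + 1 : ℕ) : ZMod n))) := by
        apply List.map_congr_left
        intro k _
        simp [Function.comp, FreeGroup.lift_apply_of]
      rw [he]
      exact key
  refine ⟨PresentedGroup.toGroup h, fun i => ?_⟩
  exact PresentedGroup.toGroup.of h

lemma mem_pm1 {x : SU11} : x ∈ pm1 ↔ x = 1 ∨ x = negOne := Iff.rfl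

lemma mk_eq_one_iff (x : SU11) :
    (QuotientGroup.mk x : PU11) = 1 ↔ x = 1 ∨ x = negOne :=
  (QuotientGroup.eq_one_iff x).trans mem_pm1

lemma mat_mul (g h : SU11) : mat (g * h) = mat g * mat h := rfl

lemma mat_negOne : mat negOne = -1 := by
  show ((-1 : SpecialLinearGroup (Fin 2) ℂ) : Matrix (Fin 2) (Fin 2) ℂ) = -1
  rw [Matrix.SpecialLinearGroup.coe_neg, Matrix.SpecialLinearGroup.coe_one]

lemma mat_pm {x : SU11} (h : x = 1 ∨ x = negOne) : mat x = 1 ∨ mat x = -1 := by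
  rcases h with rfl | rfl
  · left; rfl
  · right; exact mat_negOne

lemma isNeg_iff (p : W) : IsNeg p ↔ (herm p p).re < 0 := by
  constructor
  · exact fun h => h.2
  · intro h
    refine ⟨fun h0 => ?_, h⟩
    rw [h0] at h
    simp [herm] at h

lemma isNeg_mulVec (M : SU11) {p : W} (h : IsNeg p) : IsNeg (mat M *ᵥ p) := by
  rw [isNeg_iff] at h ⊢
  rw [herm_mulVec]
  exact h

lemma PM.mulVec {x y : W} (m : Matrix (Fin 2) (Fin 2) ℂ) (h : PM x y) :
    PM (m *ᵥ x) (m *ᵥ y) := by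
  rcases h with rfl | rfl
  · exact Or.inl rfl
  · exact Or.inr (Matrix.mulVec_neg x m)

lemma pm_of_mat {g : SU11} (h : g = 1 ∨ g = negOne) (v : W) : PM v (mat g *ᵥ v) := by
  rcases mat_pm h with h' | h' <;> rw [h']
  · exact Or.inl (Matrix.one_mulVec v)
  · refine Or.inr ?_
    rw [Matrix.neg_mulVec, Matrix.one_mulVec]


def Gsu {n : ℕ} (B : ZMod n → SU11) : ℕ → SU11
  | 0 => 1
  | (k+1) => B ((k + 1 : ℕ) : ZMod n) * Gsu B k

lemma pts_eq {n : ℕ} (B : ZMod n → SU11) (p : W) :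
    ∀ k, pts B p k = mat (Gsu B k) *ᵥ p
  | 0 => (Matrix.one_mulVec p).symm
  | (k+1) => by
      show mat (B ((k + 1 : ℕ) : ZMod n)) *ᵥ pts B p k = _
      rw [pts_eq B p k, Matrix.mulVec_mulVec, Gsu, mat_mul]

lemma Gsu_eq_prod {n : ℕ} (B : ZMod n → SU11) :
    ∀ k, (((List.range k).map (fun m => B ((m + 1 : ℕ) : ZMod n))).reverse).prod = Gsu B k
  | 0 => by simp [Gsu]
  | (k+1) => by
      rw [List.range_succ, List.map_append, List.reverse_append]
      simp only [List.map_cons, List.map_nil, List.reverse_cons, List.reverse_nil,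
        List.nil_append, List.singleton_append, List.prod_cons]
      rw [Gsu_eq_prod B k]
      rfl

lemma isNeg_pts {n : ℕ} (B : ZMod n → SU11) {p : W} (hp : IsNeg p) :
    ∀ k, IsNeg (pts B p k)
  | 0 => hp
  | (k+1) => isNeg_mulVec (B ((k + 1 : ℕ) : ZMod n)) (isNeg_pts B hp k)

lemma mk_prod_eq_one {n : ℕ} (ρ : H n →* PU11) (B : ZMod n → SU11)
    (hpt : ∀ i : ZMod n, (QuotientGroup.mk (B i) : PU11) = ρ (r n i)) :
    (((List.range n).map (fun k => B ((k + 1 : ℕ) : ZMod n))).reverse).prod = 1 ∨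
    (((List.range n).map (fun k => B ((k + 1 : ℕ) : ZMod n))).reverse).prod = negOne := by
  apply (mk_eq_one_iff _).mp
  have : (QuotientGroup.mk' pm1) ((((List.range n).map
      (fun k => B ((k + 1 : ℕ) : ZMod n))).reverse).prod)
      = ρ ((((List.range n).map (fun k => r n ((k + 1 : ℕ) : ZMod n))).reverse).prod) := by
    rw [map_list_prod, map_list_prod, List.map_reverse, List.map_reverse,
      List.map_map, List.map_map]
    congr 2
    apply List.map_congr_left
    intro k _
    simp only [Function.comp]
    exact hpt _
  rw [long_rel, _root_.map_one] at this
  exact this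

lemma isLift_of_pointwise {n : ℕ} (ρ : H n →* PU11) (B : ZMod n → SU11)
    (hpt : ∀ i : ZMod n, (QuotientGroup.mk (B i) : PU11) = ρ (r n i)) : IsLift ρ B :=
  ⟨hpt, mk_prod_eq_one ρ B hpt⟩

lemma sq_pm {n : ℕ} (σ : H n →* PU11) (B : ZMod n → SU11)
    (hpt : ∀ i : ZMod n, (QuotientGroup.mk (B i) : PU11) = σ (r n i)) (j : ZMod n) :
    B j * B j = 1 ∨ B j * B j = negOne := by
  apply (mk_eq_one_iff _).mp
  have : (QuotientGroup.mk (B j * B j) : PU11)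
      = (QuotientGroup.mk (B j) : PU11) * (QuotientGroup.mk (B j) : PU11) := rfl
  rw [this, hpt j, ← _root_.map_mul, r_sq, _root_.map_one]

lemma pm_sq_pts {n : ℕ} (σ : H n →* PU11) (B : ZMod n → SU11)
    (hpt : ∀ i : ZMod n, (QuotientGroup.mk (B i) : PU11) = σ (r n i)) (j : ZMod n) (v : W) :
    PM v (mat (B j) *ᵥ (mat (B j) *ᵥ v)) := by
  rw [Matrix.mulVec_mulVec, ← mat_mul]
  exact pm_of_mat (sq_pm σ B hpt j) v


lemma hasArea_neg {n : ℕ} (hn : 5 ≤ n) (ρ σ : H n →* PU11)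
    (hσ : ∀ i : ZMod n, σ (r n i) = ρ (r n (-i))) (a : ℝ) (hA : HasArea ρ a) :
    HasArea σ (-a) := by
  intro B hB c p hc hp
  have hn0 : n ≠ 0 := by omega
  have hptA : ∀ i : ZMod n, (QuotientGroup.mk ((fun i => B (-i)) i) : PU11) = ρ (r n i) := by
    intro i
    simp only
    rw [hB.1 (-i), hσ (-i), neg_neg]
  have hAlift : IsLift ρ (fun i => B (-i)) := isLift_of_pointwise ρ _ hptA
  set p' : W := pts B p (n - 1) with hp'def
  have hp'neg : IsNeg p' := isNeg_pts B hp (n - 1)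
  have harea : areaRep n (fun i => B (-i)) c p' = a := hA _ hAlift c p' hc hp'neg
  -- rfl facts in pts form
  have hQsucc : ∀ k, pts B p (k + 1) = mat (B ((k + 1 : ℕ) : ZMod n)) *ᵥ pts B p k :=
    fun k => rfl
  have hPsucc : ∀ k, pts (fun i => B (-i)) p' (k + 1)
      = mat (B (-((k + 1 : ℕ) : ZMod n))) *ᵥ pts (fun i => B (-i)) p' k := fun k => rfl
  have hP0 : pts (fun i => B (-i)) p' 0 = p' := rfl
  have hBsum : areaRep n B c p
      = ∑ i ∈ Finset.range n, triArea c (pts B p (i + 1)) (pts B p (i + 2)) := rfl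
  have hAsum : areaRep n (fun i => B (-i)) c p'
      = ∑ i ∈ Finset.range n, triArea c (pts (fun i => B (-i)) p' (i + 1))
          (pts (fun i => B (-i)) p' (i + 2)) := rfl
  have hQneg : ∀ k, IsNeg (pts B p k) := fun k => isNeg_pts B hp k
  have hQwrap : PM (pts B p 0) (pts B p n) := by
    have h1 := hB.2
    rw [Gsu_eq_prod] at h1
    have h2 := pm_of_mat h1 p
    rw [← pts_eq] at h2
    exact h2
  have hPwrap : PM p' (pts (fun i => B (-i)) p' n) := by
    have h1 : Gsu (fun i => B (-i)) n = 1 ∨ Gsu (fun i => B (-i)) n = negOne := by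
      rw [← Gsu_eq_prod]
      exact hAlift.2
    have h2 := pm_of_mat h1 p'
    rw [← pts_eq] at h2
    exact h2
  set Q : ℕ → W := pts B p with hQdef
  set P : ℕ → W := pts (fun i => B (-i)) p' with hPdef
  have hcast1 : ((n + 1 : ℕ) : ZMod n) = ((0 + 1 : ℕ) : ZMod n) := by
    push_cast
    simp [ZMod.natCast_self]
  have hQwrap1 : PM (Q 1) (Q (n + 1)) := by
    rw [hQsucc n, hcast1, hQsucc 0]
    exact PM.mulVec _ hQwrap
  -- main induction
  have hK : ∀ k, k ≤ n - 1 → PM (Q (n - 1 - k)) (P k) := by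
    intro k
    induction k with
    | zero =>
      intro _
      rw [Nat.sub_zero, hP0]
      exact PM.refl _
    | succ k ih =>
      intro hk1
      have hkn : k < n := by omega
      have e1 : P (k + 1) = mat (B ((n - 1 - k : ℕ) : ZMod n)) *ᵥ P k := by
        rw [hPsucc k, neg_cast_eq hn0 hkn]
      have h3 : n - 1 - k = (n - 2 - k) + 1 := by omega
      have e2 : Q (n - 1 - k) = mat (B ((n - 1 - k : ℕ) : ZMod n)) *ᵥ Q (n - 2 - k) := by
        rw [h3, hQsucc (n - 2 - k), ← h3]
      have step := pm_sq_pts σ B hB.1 ((n - 1 - k : ℕ) : ZMod n) (Q (n - 2 - k))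
      rw [← e2] at step
      have e3 : n - 1 - (k + 1) = n - 2 - k := by omega
      rw [e3, e1]
      exact step.trans (PM.mulVec _ (ih (by omega)))
  have hPn : PM (Q (n - 1)) (P n) := hPwrap
  have hPn1 : PM (Q (n - 2)) (P (n + 1)) := by
    have e : P (n + 1) = mat (B (-((0 + 1 : ℕ) : ZMod n))) *ᵥ P n := by
      rw [hPsucc n, hcast1]
    have e0 : P 1 = mat (B (-((0 + 1 : ℕ) : ZMod n))) *ᵥ Q (n - 1) := by
      rw [hPsucc 0, hP0]
    have h1 : PM (P 1) (P (n + 1)) := by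
      rw [e, e0]
      exact PM.mulVec _ hPn
    have h2 := hK 1 (by omega)
    have e4 : n - 1 - 1 = n - 2 := by omega
    rw [e4] at h2
    exact h2.trans h1
  -- sums
  have hrc : (herm c c).re < 0 := hc.2
  have hantiQ : ∀ u v, triArea c (Q v) (Q u) = - triArea c (Q u) (Q v) :=
    fun u v => triArea_antisymm hrc (hQneg u).2 (hQneg v).2
  have hBsum2 : areaRep n B c p
      = ∑ i ∈ Finset.range n,
          (fun u => triArea c (Q u) (Q (u + 1))) (if i = n - 1 then 0 else i + 1) := by
    rw [hBsum]
    apply Finset.sum_congr rfl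
    intro i hi
    rw [Finset.mem_range] at hi
    by_cases h : i = n - 1
    · subst h
      rw [if_pos rfl]
      simp only
      have e5 : n - 1 + 1 = n := by omega
      have e6 : n - 1 + 2 = n + 1 := by omega
      rw [e5, e6, triArea_pm2 hQwrap, triArea_pm3 hQwrap1]
    · rw [if_neg h]
  have hbij1 : ∑ i ∈ Finset.range n,
        (fun u => triArea c (Q u) (Q (u + 1))) (if i = n - 1 then 0 else i + 1)
      = ∑ u ∈ Finset.range n, triArea c (Q u) (Q (u + 1)) := by
    apply Finset.sum_nbij' (fun i => if i = n - 1 then 0 else i + 1)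
      (fun j => if j = 0 then n - 1 else j - 1)
    · intro a ha
      rw [Finset.mem_range] at ha ⊢
      split <;> omega
    · intro a ha
      rw [Finset.mem_range] at ha ⊢
      split <;> omega
    · intro a ha
      rw [Finset.mem_range] at ha
      rcases eq_or_ne a (n - 1) with h | h
      · rw [if_pos h, if_pos rfl, h]
      · rw [if_neg h, if_neg (by omega)]
        omega
    · intro a ha
      rw [Finset.mem_range] at ha
      rcases eq_or_ne a 0 with h | h
      · rw [if_pos h, if_pos rfl, h]
      · rw [if_neg h, if_neg (by omega)]
        omega
    · intro a ha
      rfl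
  have hAsum2 : areaRep n (fun i => B (-i)) c p'
      = ∑ i ∈ Finset.range n,
          (fun u => - triArea c (Q u) (Q (u + 1))) (if i + 3 ≤ n then n - 3 - i else 2 * n - 3 - i) := by
    rw [hAsum]
    apply Finset.sum_congr rfl
    intro i hi
    rw [Finset.mem_range] at hi
    by_cases h : i + 3 ≤ n
    · rw [if_pos h]
      simp only
      have k2 := hK (i + 2) (by omega)
      have k1 := hK (i + 1) (by omega)
      have e7 : n - 1 - (i + 2) = n - 3 - i := by omega
      have e8 : n - 1 - (i + 1) = n - 2 - i := by omega
      rw [e7] at k2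
      rw [e8] at k1
      rw [triArea_pm2 k1, triArea_pm3 k2, hantiQ]
      have e9 : n - 3 - i + 1 = n - 2 - i := by omega
      rw [e9]
    · rw [if_neg h]
      simp only
      rcases eq_or_ne i (n - 2) with h2 | h2
      · subst h2
        have e10 : n - 2 + 1 = n - 1 := by omega
        have e11 : n - 2 + 2 = n := by omega
        have e12 : 2 * n - 3 - (n - 2) = n - 1 := by omega
        rw [e10, e11, e12]
        have k1 := hK (n - 1) (by omega)
        have e13 : n - 1 - (n - 1) = 0 := by omega
        rw [e13] at k1
        rw [triArea_pm2 k1, triArea_pm3 hPn, hantiQ]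
        have e14 : n - 1 + 1 = n := by omega
        rw [e14, ← triArea_pm3 hQwrap]
      · have h3 : i = n - 1 := by omega
        subst h3
        have e15 : n - 1 + 1 = n := by omega
        have e16 : n - 1 + 2 = n + 1 := by omega
        have e17 : 2 * n - 3 - (n - 1) = n - 2 := by omega
        rw [e15, e16, e17, triArea_pm2 hPn, triArea_pm3 hPn1, hantiQ]
        have e18 : n - 2 + 1 = n - 1 := by omega
        rw [e18]
  have hbij2 : ∑ i ∈ Finset.range n,
        (fun u => - triArea c (Q u) (Q (u + 1))) (if i + 3 ≤ n then n - 3 - i else 2 * n - 3 - i)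
      = - ∑ u ∈ Finset.range n, triArea c (Q u) (Q (u + 1)) := by
    rw [← Finset.sum_neg_distrib]
    apply Finset.sum_nbij' (fun i => if i + 3 ≤ n then n - 3 - i else 2 * n - 3 - i)
      (fun i => if i + 3 ≤ n then n - 3 - i else 2 * n - 3 - i)
    · intro a ha
      rw [Finset.mem_range] at ha ⊢
      split <;> omega
    · intro a ha
      rw [Finset.mem_range] at ha ⊢
      split <;> omega
    · intro a ha
      rw [Finset.mem_range] at ha
      by_cases h : a + 3 ≤ n
      · rw [if_pos h]
        by_cases h2 : n - 3 - a + 3 ≤ n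
        · rw [if_pos h2]
          omega
        · rw [if_neg h2]
          omega
      · rw [if_neg h, if_neg (by omega)]
        omega
    · intro a ha
      rw [Finset.mem_range] at ha
      by_cases h : a + 3 ≤ n
      · rw [if_pos h]
        by_cases h2 : n - 3 - a + 3 ≤ n
        · rw [if_pos h2]
          omega
        · rw [if_neg h2]
          omega
      · rw [if_neg h, if_neg (by omega)]
        omega
    · intro a ha
      rfl
  rw [hAsum2, hbij2] at harea
  rw [hBsum2, hbij1]
  linarith

/-- `ρJ` is a well-defined representation of `H_n`
(`r_{n-i} = r_{-i}` since indices are modulo `n`) and `Area ρJ = -Area ρ`. -/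
theorem areaJ_neg (n : ℕ) (hn : 5 ≤ n) (ρ : H n →* PU11) :
    (∃ σ : H n →* PU11, ∀ i : ZMod n, σ (r n i) = ρ (r n (-i))) ∧
    (∀ σ : H n →* PU11, (∀ i : ZMod n, σ (r n i) = ρ (r n (-i))) →
      ∀ a : ℝ, HasArea ρ a → HasArea σ (-a)) := by
  refine ⟨exists_sigma n (by omega) ρ, ?_⟩
  intro σ hσ a hA
  exact hasArea_neg hn ρ σ hσ a hA

end HView
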